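/- arXiv:1603.08504 — 2 statements merged into one kernel-verified Lean document; each statement's English description precedes it below -/
import Mathlib

section
/- Let α > 0, β > 0 be real numbers. Then for all z ∈ (0,∞) the Turán type inequality 𝔼_{α,β}(z)·𝔼_{α,β+2}(z) − [𝔼_{α,β+1}(z)]² ≥ 0 holds. -/
/-- The Mittag-Leffler function `E_{α,β}(z) = ∑_{n=0}^∞ z^n / Γ(α n + β)`. -/
noncomputable def mittagLeffler (α β z : ℝ) : ℝ :=
  ∑' n : ℕ, z ^ n / Real.Gamma (α * n + β)

/-- The normalized Mittag-Leffler function `𝔼_{α,β}(z) = Γ(β) E_{α,β}(z)`. -/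
noncomputable def mittagLefflerNorm (α β z : ℝ) : ℝ :=
  Real.Gamma β * mittagLeffler α β z

open Filter Finset

lemma summable_ml (α β z : ℝ) (hα : 0 < α) (hβ : 0 < β) (hz : 0 < z) :
    Summable (fun n : ℕ => z ^ n / Real.Gamma (α * n + β)) := by
  set k := ⌈α⁻¹⌉₊ + 1 with hkdef
  have hk0 : 0 < k := Nat.succ_pos _
  have hαk : 1 ≤ α * k := by
    have h1 : α⁻¹ ≤ (k : ℝ) := le_trans (Nat.le_ceil _) (by exact_mod_cast Nat.le_succ _)
    calc (1:ℝ) = α * α⁻¹ := (mul_inv_cancel₀ hα.ne').symm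
    _ ≤ α * k := by gcongr
  set M := max (2*z) 1 with hMdef
  have hM1 : (1:ℝ) ≤ M := le_max_right _ _
  set R := M ^ k with hRdef
  have hR1 : (1:ℝ) ≤ R := one_le_pow₀ hM1
  have hR0 : (0:ℝ) < R := lt_of_lt_of_le one_pos hR1
  have h0 : Tendsto (fun j : ℕ => R ^ j / (Nat.factorial j : ℝ)) atTop (nhds 0) :=
    (Real.summable_pow_div_factorial R).tendsto_atTop_zero
  have hev : ∀ᶠ j : ℕ in atTop, R ^ (j+2) ≤ (Nat.factorial j : ℝ) := by
    filter_upwards [h0.eventually (gt_mem_nhds (show (0:ℝ) < (R^2)⁻¹ by positivity))] with j hj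
    have hfac : (0:ℝ) < (Nat.factorial j : ℝ) := by positivity
    have h2 : (0:ℝ) < R^2 := by positivity
    rw [div_lt_iff₀ hfac, inv_mul_eq_div, lt_div_iff₀ h2] at hj
    have he : R ^ (j+2) = R ^ j * R ^ 2 := by ring
    rw [he]
    linarith
  obtain ⟨J, hJ⟩ := eventually_atTop.mp hev
  apply Summable.of_norm_bounded_eventually (g := fun n => (1/2:ℝ)^n)
    (summable_geometric_of_lt_one (by norm_num) (by norm_num))
  rw [Nat.cofinite_eq_atTop]
  filter_upwards [eventually_ge_atTop (k*(J+3))] with n hn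
  set m := n / k with hmdef
  clear_value m
  have hm3 : J + 3 ≤ m := by
    rw [hmdef]
    exact (Nat.le_div_iff_mul_le hk0).mpr (by simpa [Nat.mul_comm] using hn)
  have hmn : (m:ℝ) ≤ α*n + β := by
    have h1 : (m:ℝ) ≤ (n:ℝ)/(k:ℝ) := by rw [hmdef]; exact Nat.cast_div_le
    have hkpos : (0:ℝ) < k := by exact_mod_cast hk0
    have h2 : (n:ℝ)/(k:ℝ) ≤ α*n := by
      rw [div_le_iff₀ hkpos]
      nlinarith [Nat.cast_nonneg (α := ℝ) n]
    linarith
  have hm2 : (2:ℝ) ≤ (m:ℝ) := by exact_mod_cast (by omega : 2 ≤ m)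
  have hΓ : (Nat.factorial (m-1) : ℝ) ≤ Real.Gamma (α*n+β) := by
    have hfac : Real.Gamma (m:ℝ) = (Nat.factorial (m-1) : ℝ) := by
      obtain ⟨m', rfl⟩ : ∃ m', m = m' + 1 := ⟨m-1, by omega⟩
      have hc : ((m'+1 : ℕ) : ℝ) = (m' : ℝ) + 1 := by push_cast; ring
      rw [hc, Real.Gamma_nat_eq_factorial]
      norm_num
    rw [← hfac]
    exact Real.Gamma_strictMonoOn_Ici.monotoneOn hm2 (le_trans hm2 hmn) hmn
  have h2z : (2*z)^n ≤ (Nat.factorial (m-1) : ℝ) := by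
    have hnlt : n < k*(m+1) := by
      rw [hmdef, Nat.mul_succ]
      calc n = k*(n/k) + n%k := (Nat.div_add_mod n k).symm
      _ < k*(n/k) + k := Nat.add_lt_add_left (Nat.mod_lt n hk0) _
    calc (2*z)^n ≤ M^n := pow_le_pow_left₀ (by positivity) (le_max_left _ _) n
    _ ≤ M^(k*(m+1)) := pow_le_pow_right₀ hM1 hnlt.le
    _ = R^(m+1) := by rw [hRdef, ← pow_mul]
    _ = R^((m-1)+2) := by congr 1; omega
    _ ≤ (Nat.factorial (m-1) : ℝ) := hJ (m-1) (by omega)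
  have hΓpos : 0 < Real.Gamma (α*n+β) := Real.Gamma_pos_of_pos (by positivity)
  rw [Real.norm_eq_abs, abs_of_nonneg (by positivity), div_le_iff₀ hΓpos]
  calc z^n = (1/2:ℝ)^n * (2*z)^n := by rw [← mul_pow]; ring_nf
  _ ≤ (1/2:ℝ)^n * Real.Gamma (α*n+β) :=
      mul_le_mul_of_nonneg_left (le_trans h2z hΓ) (by positivity)

/-- Turán type inequality for the normalized Mittag-Leffler function. -/
theorem mittagLefflerNorm_turan (α β : ℝ) (hα : 0 < α) (hβ : 0 < β) :
    ∀ z : ℝ, 0 < z →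
      mittagLefflerNorm α β z * mittagLefflerNorm α (β + 2) z -
        (mittagLefflerNorm α (β + 1) z) ^ 2 ≥ 0 := by
  intro z hz
  set A : ℕ → ℝ := fun n => Real.Gamma β * (z ^ n / Real.Gamma (α * n + β)) with hAdef
  set B : ℕ → ℝ := fun n => Real.Gamma (β+1) * (z ^ n / Real.Gamma (α * n + (β+1))) with hBdef
  set C : ℕ → ℝ := fun n => Real.Gamma (β+2) * (z ^ n / Real.Gamma (α * n + (β+2))) with hCdef
  have hΓβ : 0 < Real.Gamma β := Real.Gamma_pos_of_pos hβ
  have hApos : ∀ n, 0 < A n := fun n => by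
    have h1 := Real.Gamma_pos_of_pos (show (0:ℝ) < α * n + β by positivity)
    positivity
  have hBpos : ∀ n, 0 < B n := fun n => by
    have h1 := Real.Gamma_pos_of_pos (show (0:ℝ) < α * n + (β+1) by positivity)
    have h2 := Real.Gamma_pos_of_pos (show (0:ℝ) < β + 1 by positivity)
    positivity
  have hCpos : ∀ n, 0 < C n := fun n => by
    have h1 := Real.Gamma_pos_of_pos (show (0:ℝ) < α * n + (β+2) by positivity)
    have h2 := Real.Gamma_pos_of_pos (show (0:ℝ) < β + 2 by positivity)
    positivity
  have hA : Summable A := (summable_ml α β z hα hβ hz).mul_left _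
  have hC : Summable C := (summable_ml α (β+2) z hα (by linarith) hz).mul_left _
  have hkey : ∀ n, B n ^ 2 ≤ A n * C n := by
    intro n
    have hx : (0:ℝ) < α * n + β := by positivity
    have hg : 0 < Real.Gamma (α * n + β) := Real.Gamma_pos_of_pos hx
    have hβx : β ≤ α*n+β := by nlinarith [Nat.cast_nonneg (α := ℝ) n]
    have e1 : Real.Gamma (β+1) = β * Real.Gamma β := Real.Gamma_add_one hβ.ne'
    have e2 : Real.Gamma (β+2) = (β+1) * (β * Real.Gamma β) := by
      rw [show β+2 = (β+1)+1 by ring, Real.Gamma_add_one (by linarith), e1]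
    have e3 : Real.Gamma (α*n + (β+1)) = (α*n+β) * Real.Gamma (α*n+β) := by
      rw [show α*(n:ℝ)+(β+1) = (α*n+β)+1 by ring, Real.Gamma_add_one hx.ne']
    have e4 : Real.Gamma (α*n + (β+2)) =
        (α*n+β+1) * ((α*n+β) * Real.Gamma (α*n+β)) := by
      rw [show α*(n:ℝ)+(β+2) = ((α*n+β)+1)+1 by ring,
        Real.Gamma_add_one (by linarith), Real.Gamma_add_one hx.ne']
    have hBA : B n = A n * (β / (α*n+β)) := by
      simp only [hBdef, hAdef, e1, e3]
      field_simp
    have hCA : C n = A n * (β*(β+1) / ((α*n+β)*(α*n+β+1))) := by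
      simp only [hCdef, hAdef, e2, e4]
      field_simp
    have hsc : (β / (α*n+β))^2 ≤ β*(β+1) / ((α*n+β)*(α*n+β+1)) := by
      rw [div_pow, div_le_div_iff₀ (by positivity) (by positivity)]
      nlinarith [mul_nonneg (mul_nonneg hβ.le hx.le) (sub_nonneg.mpr hβx)]
    calc B n ^ 2 = A n ^ 2 * (β / (α*n+β))^2 := by rw [hBA]; ring
    _ ≤ A n ^ 2 * (β*(β+1) / ((α*n+β)*(α*n+β+1))) := by
        have := sq_nonneg (A n); gcongr
    _ = A n * C n := by rw [hCA]; ring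
  have hB : Summable B := by
    have hsum : Summable (fun n => (A n + C n)/2) := (hA.add hC).div_const 2
    refine Summable.of_nonneg_of_le (fun n => (hBpos n).le) (fun n => ?_) hsum
    nlinarith [hkey n, sq_nonneg (A n - C n), (hApos n).le, (hCpos n).le, (hBpos n).le]
  have key : ∀ s : Finset ℕ, (∑ n ∈ s, B n)^2 ≤ (∑' n, A n) * (∑' n, C n) := by
    intro s
    have cs : (∑ n ∈ s, B n)^2 ≤ (∑ n ∈ s, A n) * (∑ n ∈ s, C n) := by
      calc (∑ n ∈ s, B n)^2 ≤ (∑ n ∈ s, Real.sqrt (A n * C n))^2 := by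
            apply pow_le_pow_left₀ (Finset.sum_nonneg fun n _ => (hBpos n).le)
            apply Finset.sum_le_sum
            intro i _
            exact (Real.le_sqrt (hBpos i).le (mul_nonneg (hApos i).le (hCpos i).le)).mpr (hkey i)
      _ ≤ (∑ n ∈ s, A n) * (∑ n ∈ s, C n) :=
          Finset.sum_sq_le_sum_mul_sum_of_sq_eq_mul s
            (fun i _ => (hApos i).le) (fun i _ => (hCpos i).le)
            (fun i _ => Real.sq_sqrt (mul_nonneg (hApos i).le (hCpos i).le))
    refine le_trans cs (mul_le_mul ?_ ?_ ?_ ?_)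
    · exact hA.sum_le_tsum s (fun n _ => (hApos n).le)
    · exact hC.sum_le_tsum s (fun n _ => (hCpos n).le)
    · exact Finset.sum_nonneg fun n _ => (hCpos n).le
    · exact tsum_nonneg fun n => (hApos n).le
  have hBsq : (∑' n, B n)^2 ≤ (∑' n, A n) * (∑' n, C n) := by
    have ht : Tendsto (fun s : Finset ℕ => (∑ n ∈ s, B n)^2) atTop
        (nhds ((∑' n, B n)^2)) := Filter.Tendsto.pow hB.hasSum 2
    exact le_of_tendsto' ht key
  have eA : mittagLefflerNorm α β z = ∑' n, A n := by
    rw [mittagLefflerNorm, mittagLeffler, ← tsum_mul_left]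
  have eB : mittagLefflerNorm α (β+1) z = ∑' n, B n := by
    rw [mittagLefflerNorm, mittagLeffler, ← tsum_mul_left]
  have eC : mittagLefflerNorm α (β+2) z = ∑' n, C n := by
    rw [mittagLefflerNorm, mittagLeffler, ← tsum_mul_left]
  rw [eA, eB, eC, ge_iff_le, sub_nonneg]
  exact hBsq
end

section
/- Let α > 0 and β > 1 be real numbers. Then the inequality 𝔼_{α,β+1}(z) ≤ [𝔼_{α,β}(z)]^{β/(β−1)} holds for all real z ≥ 0, where the power is a real power of the positive number 𝔼_{α,β}(z). -/
open Real

/-- Gamma growth: for `x > 1`, `Γ(x) * (x-1)^α ≤ Γ(x+α)`. -/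
lemma gamma_growth {α x : ℝ} (hα : 0 < α) (hx : 1 < x) :
    Real.Gamma x * (x - 1) ^ α ≤ Real.Gamma (x + α) := by
  have hx0 : (0:ℝ) < x - 1 := by linarith
  have h1 : (x - 1) ∈ Set.Ioi (0:ℝ) := hx0
  have h2 : (x + α) ∈ Set.Ioi (0:ℝ) := by simp; linarith
  have hslope := Real.convexOn_log_Gamma.slope_mono_adjacent h1 h2
    (by linarith : x - 1 < x) (by linarith : x < x + α)
  simp only [Function.comp] at hslope
  have hG : Real.Gamma x = (x - 1) * Real.Gamma (x - 1) := by
    have := Real.Gamma_add_one (s := x - 1) (ne_of_gt hx0)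
    simpa using this
  have hGx : 0 < Real.Gamma x := Real.Gamma_pos_of_pos (by linarith)
  have hGx1 : 0 < Real.Gamma (x - 1) := Real.Gamma_pos_of_pos hx0
  have hlog : Real.log (Real.Gamma x) - Real.log (Real.Gamma (x - 1)) = Real.log (x - 1) := by
    rw [hG, Real.log_mul (ne_of_gt hx0) (ne_of_gt hGx1)]; ring
  have key : Real.log (Real.Gamma x) + α * Real.log (x - 1) ≤ Real.log (Real.Gamma (x + α)) := by
    have h3 : (Real.log (Real.Gamma x) - Real.log (Real.Gamma (x - 1))) / (x - (x - 1))
        ≤ (Real.log (Real.Gamma (x + α)) - Real.log (Real.Gamma x)) / (x + α - x) := hslope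
    rw [hlog] at h3
    have : Real.log (x - 1) ≤ (Real.log (Real.Gamma (x + α)) - Real.log (Real.Gamma x)) / α := by
      simpa using h3
    have h4 := (le_div_iff₀ hα).mp this
    nlinarith [h4]
  calc Real.Gamma x * (x - 1) ^ α
      = Real.exp (Real.log (Real.Gamma x) + α * Real.log (x - 1)) := by
        rw [Real.exp_add, Real.exp_log hGx, Real.rpow_def_of_pos hx0, mul_comm (Real.log (x-1))]
    _ ≤ Real.Gamma (x + α) := by
        rw [← Real.exp_log (Real.Gamma_pos_of_pos (by linarith : (0:ℝ) < x + α))]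
        exact Real.exp_le_exp.mpr key

/-- Summability of the Mittag-Leffler series. -/
lemma ml_summable {α β z : ℝ} (hα : 0 < α) (hβ : 0 < β) (hz : 0 ≤ z) :
    Summable (fun n : ℕ => z ^ n / Real.Gamma (α * n + β)) := by
  apply summable_of_ratio_norm_eventually_le (r := 1/2) (by norm_num)
  -- eventually ‖a (n+1)‖ ≤ (1/2) ‖a n‖
  have htend : Filter.Tendsto (fun n : ℕ => α * n + β) Filter.atTop Filter.atTop := by
    apply Filter.tendsto_atTop_add_const_right
    exact (tendsto_natCast_atTop_atTop (R := ℝ)).const_mul_atTop hα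
  have hev : ∀ᶠ n : ℕ in Filter.atTop, max 2 (1 + (2 * z) ^ (1/α)) ≤ α * n + β :=
    htend.eventually_ge_atTop _
  filter_upwards [hev] with n hn
  set x := α * n + β with hxdef
  have hx1 : (1:ℝ) < x := lt_of_lt_of_le (by norm_num) ((le_max_left _ _).trans hn)
  have hx0 : (0:ℝ) < x := by linarith
  have hGx : 0 < Real.Gamma x := Real.Gamma_pos_of_pos hx0
  have hGxa : 0 < Real.Gamma (x + α) := Real.Gamma_pos_of_pos (by linarith)
  have hpow : 2 * z ≤ (x - 1) ^ α := by
    have h1 : (2 * z) ^ (1/α) ≤ x - 1 := by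
      have := (le_max_right 2 (1 + (2 * z) ^ (1/α))).trans hn; linarith
    have h2 : ((2 * z) ^ (1/α)) ^ α ≤ (x - 1) ^ α :=
      Real.rpow_le_rpow (Real.rpow_nonneg (by linarith) _) h1 (le_of_lt hα)
    rwa [← Real.rpow_mul (by linarith : (0:ℝ) ≤ 2 * z), one_div,
      inv_mul_cancel₀ (ne_of_gt hα), Real.rpow_one] at h2
  have hgrow : Real.Gamma x * (x - 1) ^ α ≤ Real.Gamma (x + α) := gamma_growth hα hx1
  have key : 2 * z * Real.Gamma x ≤ Real.Gamma (x + α) := by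
    calc 2 * z * Real.Gamma x ≤ (x - 1) ^ α * Real.Gamma x := by
          exact mul_le_mul_of_nonneg_right hpow (le_of_lt hGx)
      _ ≤ Real.Gamma (x + α) := by rw [mul_comm]; exact hgrow
  have hxn : α * (n + 1 : ℕ) + β = x + α := by push_cast; ring
  rw [hxn]
  have ht1 : z ^ (n+1) / Real.Gamma (x + α) ≤ (1/2) * (z ^ n / Real.Gamma x) := by
    rw [div_le_iff₀ hGxa]
    have : (1/2) * (z ^ n / Real.Gamma x) * Real.Gamma (x + α)
        = (z ^ n / Real.Gamma x) * (Real.Gamma (x + α) / 2) := by ring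
    rw [this]
    calc z ^ (n+1) = (z ^ n / Real.Gamma x) * (z * Real.Gamma x) := by
          field_simp; ring
      _ ≤ (z ^ n / Real.Gamma x) * (Real.Gamma (x + α) / 2) := by
          apply mul_le_mul_of_nonneg_left _ (by positivity)
          linarith
  have h0 : 0 ≤ z ^ (n+1) / Real.Gamma (x + α) := by positivity
  have h0' : 0 ≤ z ^ n / Real.Gamma x := by positivity
  rw [Real.norm_eq_abs, Real.norm_eq_abs, abs_of_nonneg h0, abs_of_nonneg h0']
  exact ht1

/-- Lazarević-type inequality for the normalized Mittag-Leffler function. -/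
theorem mittagLefflerNorm_lazarevic_special (α β : ℝ) (hα : 0 < α) (hβ : 1 < β) :
    ∀ z : ℝ, 0 ≤ z →
      mittagLefflerNorm α (β + 1) z ≤ (mittagLefflerNorm α β z) ^ (β / (β - 1)) := by
  intro z hz
  have hβ0 : 0 < β := by linarith
  have hsumβ := ml_summable hα hβ0 hz (z := z)
  have hsumβ1 := ml_summable hα (by linarith : (0:ℝ) < β + 1) hz (z := z)
  have hterm : ∀ n : ℕ, Real.Gamma (β+1) * (z^n / Real.Gamma (α*n + (β+1))) ≤
      Real.Gamma β * (z^n / Real.Gamma (α*n + β)) := by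
    intro n
    have hx : 0 < α * n + β := by positivity
    have hG1 : Real.Gamma (β+1) = β * Real.Gamma β := Real.Gamma_add_one (ne_of_gt hβ0)
    have hG2 : Real.Gamma (α*n + (β+1)) = (α*n+β) * Real.Gamma (α*n+β) := by
      rw [show α*(n:ℝ) + (β+1) = (α*n+β) + 1 by ring]
      exact Real.Gamma_add_one (ne_of_gt hx)
    rw [hG1, hG2]
    have hGβ : 0 < Real.Gamma β := Real.Gamma_pos_of_pos hβ0
    have hGx : 0 < Real.Gamma (α*n+β) := Real.Gamma_pos_of_pos hx
    have heq : β * Real.Gamma β * (z^n / ((α*n+β) * Real.Gamma (α*n+β)))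
        = (β / (α*n+β)) * (Real.Gamma β * (z^n / Real.Gamma (α*n+β))) := by
      field_simp
    rw [heq]
    calc (β / (α*n+β)) * (Real.Gamma β * (z^n / Real.Gamma (α*n+β)))
        ≤ 1 * (Real.Gamma β * (z^n / Real.Gamma (α*n+β))) := by
          apply mul_le_mul_of_nonneg_right _ (by positivity)
          rw [div_le_one hx]
          nlinarith [Nat.cast_nonneg (α := ℝ) n]
      _ = Real.Gamma β * (z^n / Real.Gamma (α*n+β)) := one_mul _
  have hA : mittagLefflerNorm α (β+1) z ≤ mittagLefflerNorm α β z := by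
    unfold mittagLefflerNorm mittagLeffler
    rw [← tsum_mul_left, ← tsum_mul_left]
    exact Summable.tsum_le_tsum hterm (hsumβ1.mul_left _) (hsumβ.mul_left _)
  have hB : 1 ≤ mittagLefflerNorm α β z := by
    unfold mittagLefflerNorm mittagLeffler
    have hGβ : 0 < Real.Gamma β := Real.Gamma_pos_of_pos hβ0
    have h0 : z^(0:ℕ) / Real.Gamma (α*(0:ℕ)+β) = 1 / Real.Gamma β := by norm_num
    have hle : 1 / Real.Gamma β ≤ ∑' n : ℕ, z ^ n / Real.Gamma (α * n + β) := by
      rw [← h0]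
      exact Summable.le_tsum hsumβ 0 (fun i _ => by positivity)
    calc (1:ℝ) = Real.Gamma β * (1 / Real.Gamma β) := by field_simp
      _ ≤ Real.Gamma β * ∑' n : ℕ, z ^ n / Real.Gamma (α * n + β) :=
          mul_le_mul_of_nonneg_left hle (le_of_lt hGβ)
  have hexp : (1:ℝ) ≤ β / (β - 1) := by
    rw [le_div_iff₀ (by linarith)]; linarith
  calc mittagLefflerNorm α (β+1) z ≤ mittagLefflerNorm α β z := hA
    _ = (mittagLefflerNorm α β z) ^ (1:ℝ) := (Real.rpow_one _).symm
    _ ≤ (mittagLefflerNorm α β z) ^ (β / (β - 1)) :=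
        Real.rpow_le_rpow_of_exponent_le hB hexp
end
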